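/- Let q ≥ 2 be real and let p ∈ (q, ∞]. Let H ∈ {−1, +1}^{n×n} satisfy H Hᵀ = n·I, let J¹ ∈ ℝ^{n×n} be the matrix whose only nonzero entry is a 1 in position (1,1), and set A = J¹ + n^{−1/q−1/2}·H. Then for every ε with n^{−(1/q − 1/p)} ≤ ε < 1/2 (with the convention 1/∞ = 0): ‖A − J¹‖_{S_p} < 2ε‖A‖_{S_p} and nnz(J¹) = 1, while every Ã ∈ ℝ^{n×n} with ‖A − Ã‖_{S_q} ≤ 0.1‖A‖_{S_q} satisfies nnz(Ã) > n²/4 − 1. -/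

import Mathlib

open scoped BigOperators ENNReal
open Matrix

/-- Number of nonzero entries of a vector. -/
noncomputable def nnzv {n : ℕ} (x : Fin n → ℝ) : ℕ :=
  (Finset.univ.filter fun i => x i ≠ 0).card

/-- The ℓ_p norm of a vector, for a real exponent `p`. -/
noncomputable def lpNorm {n : ℕ} (p : ℝ) (x : Fin n → ℝ) : ℝ :=
  (∑ i, |x i| ^ p) ^ (1 / p)

/-- `IsHead x c y` : `y` is obtained from `x` by keeping (at most) `c` entries that are
largest in absolute value (exactly `min c n` of them, ties broken arbitrarily) and zeroing out the rest. -/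
def IsHead {n : ℕ} (x : Fin n → ℝ) (c : ℕ) (y : Fin n → ℝ) : Prop :=
  ∃ T : Finset (Fin n), T.card = min c n ∧ (∀ i ∈ T, y i = x i) ∧ (∀ i ∉ T, y i = 0) ∧
    ∀ i ∈ T, ∀ j ∉ T, |x j| ≤ |x i|

/-- Replacement for the Mathlib lemma `Matrix.isHermitian_transpose_mul_self` (removed). -/
theorem Matrix.isHermitian_transpose_mul_self {m n : Type*} [Fintype m]
    (A : Matrix m n ℝ) : (Aᵀ * A).IsHermitian := by
  rw [← Matrix.conjTranspose_eq_transpose_of_trivial]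
  exact Matrix.isHermitian_conjTranspose_mul_self A

/-- The singular values of a real matrix: square roots of the eigenvalues of `Aᵀ * A`. -/
noncomputable def singVals {m n : Type*} [Fintype m] [Fintype n] [DecidableEq n]
    (A : Matrix m n ℝ) : n → ℝ :=
  fun j => Real.sqrt ((Matrix.isHermitian_transpose_mul_self A).eigenvalues j)

/-- The Schatten p-(quasi)norm of a real matrix, for a real exponent `p > 0`. -/
noncomputable def schattenF {m n : Type*} [Fintype m] [Fintype n] [DecidableEq n]
    (p : ℝ) (A : Matrix m n ℝ) : ℝ :=
  (∑ j, singVals A j ^ p) ^ (1 / p)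

/-- The spectral norm (Schatten ∞-norm): the largest singular value. -/
noncomputable def specNorm {m n : Type*} [Fintype m] [Fintype n] [DecidableEq n]
    (A : Matrix m n ℝ) : ℝ :=
  ⨆ j, singVals A j

open Classical in
/-- The Schatten p-norm with exponent `p ∈ (0,∞]`. -/
noncomputable def schattenE {m n : Type*} [Fintype m] [Fintype n] [DecidableEq n]
    (p : ℝ≥0∞) (A : Matrix m n ℝ) : ℝ :=
  if p = ⊤ then specNorm A else schattenF p.toReal A

/-- Number of nonzero entries of a matrix. -/
noncomputable def nnz {m n : Type*} [Fintype m] [Fintype n] (A : Matrix m n ℝ) : ℕ :=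
  (Finset.univ.filter fun ij : m × n => A ij.1 ij.2 ≠ 0).card


open scoped RealInnerProductSpace

namespace Stmt10Aux

variable {n : ℕ}

/-- function → EuclideanSpace -/
noncomputable def E (x : Fin n → ℝ) : EuclideanSpace ℝ (Fin n) :=
  (WithLp.equiv 2 ((i : Fin n) → ℝ)).symm x

/-- the eigenvector basis of Aᴴ*A, as plain functions -/
noncomputable def V (A : Matrix (Fin n) (Fin n) ℝ) (j : Fin n) : Fin n → ℝ :=
  (WithLp.equiv 2 ((i : Fin n) → ℝ)) ((Matrix.isHermitian_transpose_mul_self A).eigenvectorBasis j)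

lemma inner_EE (x y : Fin n → ℝ) : ⟪E x, E y⟫ = x ⬝ᵥ y := by
  simp [E, PiLp.inner_apply, RCLike.inner_apply, dotProduct, mul_comm]

lemma inner_BE (A : Matrix (Fin n) (Fin n) ℝ) (j : Fin n) (x : Fin n → ℝ) :
    ⟪(Matrix.isHermitian_transpose_mul_self A).eigenvectorBasis j, E x⟫ = V A j ⬝ᵥ x := by
  simp [E, V, PiLp.inner_apply, RCLike.inner_apply, dotProduct, mul_comm]

lemma inner_EB (A : Matrix (Fin n) (Fin n) ℝ) (j : Fin n) (x : Fin n → ℝ) :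
    ⟪E x, (Matrix.isHermitian_transpose_mul_self A).eigenvectorBasis j⟫ = V A j ⬝ᵥ x := by
  simp [E, V, PiLp.inner_apply, RCLike.inner_apply, dotProduct, mul_comm]

lemma inner_BB (A : Matrix (Fin n) (Fin n) ℝ) (j : Fin n) :
    ⟪(Matrix.isHermitian_transpose_mul_self A).eigenvectorBasis j,
      (Matrix.isHermitian_transpose_mul_self A).eigenvectorBasis j⟫ = V A j ⬝ᵥ V A j := by
  simp only [V, PiLp.inner_apply, RCLike.inner_apply, dotProduct, conj_trivial, WithLp.equiv_apply]

lemma quad_eq (A : Matrix (Fin n) (Fin n) ℝ) (x : Fin n → ℝ) :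
    x ⬝ᵥ ((Aᴴ * A) *ᵥ x) = (A *ᵥ x) ⬝ᵥ (A *ᵥ x) := by
  rw [← Matrix.mulVec_mulVec, Matrix.dotProduct_mulVec, Matrix.vecMul_conjTranspose]
  simp

lemma basis_unit (A : Matrix (Fin n) (Fin n) ℝ) (j : Fin n) : V A j ⬝ᵥ V A j = 1 := by
  rw [← inner_BB]
  rw [real_inner_self_eq_norm_sq]
  rw [(Matrix.isHermitian_transpose_mul_self A).eigenvectorBasis.orthonormal.1 j]
  norm_num

lemma mulVec_V (A : Matrix (Fin n) (Fin n) ℝ) (j : Fin n) :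
    (Aᴴ * A) *ᵥ V A j = (Matrix.isHermitian_transpose_mul_self A).eigenvalues j • V A j :=
  (Matrix.isHermitian_transpose_mul_self A).mulVec_eigenvectorBasis j

lemma eig_eq_norm (A : Matrix (Fin n) (Fin n) ℝ) (j : Fin n) :
    (Matrix.isHermitian_transpose_mul_self A).eigenvalues j =
      (A *ᵥ V A j) ⬝ᵥ (A *ᵥ V A j) := by
  rw [← quad_eq, mulVec_V, dotProduct_smul, smul_eq_mul, basis_unit, mul_one]

/-- Parseval -/
lemma parseval (A : Matrix (Fin n) (Fin n) ℝ) (x : Fin n → ℝ) :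
    ∑ j, (V A j ⬝ᵥ x) ^ 2 = x ⬝ᵥ x := by
  have h := (Matrix.isHermitian_transpose_mul_self A).eigenvectorBasis.sum_inner_mul_inner
    (E x) (E x)
  rw [inner_EE] at h
  rw [← h]
  refine Finset.sum_congr rfl fun j _ => ?_
  rw [inner_EB, inner_BE, sq]

/-- Rayleigh -/
lemma rayleigh (hn : 0 < n) (A : Matrix (Fin n) (Fin n) ℝ) (x : Fin n → ℝ) (hx : x ⬝ᵥ x = 1) :
    ∃ j, (A *ᵥ x) ⬝ᵥ (A *ᵥ x) ≤ (Matrix.isHermitian_transpose_mul_self A).eigenvalues j := by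
  haveI : Nonempty (Fin n) := ⟨⟨0, hn⟩⟩
  set hM := Matrix.isHermitian_transpose_mul_self A with hMdef
  obtain ⟨j0, -, hj0⟩ := Finset.exists_max_image Finset.univ hM.eigenvalues
    ⟨Classical.arbitrary _, Finset.mem_univ _⟩
  refine ⟨j0, ?_⟩
  have hsymm : (Aᴴ * A)ᵀ = Aᴴ * A :=
    ((Matrix.conjTranspose_eq_transpose_of_trivial _).symm).trans hM
  have key : ∀ j : Fin n, (V A j ⬝ᵥ ((Aᴴ * A) *ᵥ x)) =
      hM.eigenvalues j * (V A j ⬝ᵥ x) := by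
    intro j
    rw [Matrix.dotProduct_mulVec, ← Matrix.mulVec_transpose, hsymm, ← dotProduct_comm,
      mulVec_V, dotProduct_smul, smul_eq_mul, dotProduct_comm]
  have expand : (A *ᵥ x) ⬝ᵥ (A *ᵥ x) = ∑ j, hM.eigenvalues j * (V A j ⬝ᵥ x) ^ 2 := by
    rw [← quad_eq]
    have h := hM.eigenvectorBasis.sum_inner_mul_inner (E x) (E ((Aᴴ * A) *ᵥ x))
    rw [inner_EE] at h
    rw [← h]
    refine Finset.sum_congr rfl fun j _ => ?_
    rw [inner_EB, inner_BE, key j]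
    ring
  rw [expand]
  calc ∑ j, hM.eigenvalues j * (V A j ⬝ᵥ x) ^ 2
      ≤ ∑ j, hM.eigenvalues j0 * (V A j ⬝ᵥ x) ^ 2 :=
        Finset.sum_le_sum fun j _ =>
          mul_le_mul_of_nonneg_right (hj0 j (Finset.mem_univ j)) (sq_nonneg _)
    _ = hM.eigenvalues j0 := by rw [← Finset.mul_sum, parseval, hx, mul_one]

/-- sum of eigenvalues is the Frobenius norm squared -/
lemma sum_eig (A : Matrix (Fin n) (Fin n) ℝ) :
    ∑ j, (Matrix.isHermitian_transpose_mul_self A).eigenvalues j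
      = ∑ i, ∑ k, (A i k) ^ 2 := by
  have h : ∀ j, (Matrix.isHermitian_transpose_mul_self A).eigenvalues j
      = ∑ i, ((fun k => A i k) ⬝ᵥ V A j) ^ 2 := by
    intro j
    rw [eig_eq_norm]
    simp only [dotProduct, Matrix.mulVec, sq]
  simp only [h]
  rw [Finset.sum_comm]
  refine Finset.sum_congr rfl fun i _ => ?_
  calc ∑ j, ((fun k => A i k) ⬝ᵥ V A j) ^ 2
      = ∑ j, (V A j ⬝ᵥ (fun k => A i k)) ^ 2 := by
        simp_rw [dotProduct_comm]
    _ = (fun k => A i k) ⬝ᵥ (fun k => A i k) := parseval A _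
    _ = ∑ k, A i k ^ 2 := by simp [dotProduct, sq]

lemma eig_of_smul_one (A : Matrix (Fin n) (Fin n) ℝ) (a : ℝ) (h : Aᴴ * A = a • 1) (j : Fin n) :
    (Matrix.isHermitian_transpose_mul_self A).eigenvalues j = a := by
  rw [eig_eq_norm, ← quad_eq, h, Matrix.smul_mulVec, Matrix.one_mulVec,
    dotProduct_smul, smul_eq_mul, basis_unit, mul_one]

lemma HtH {H : Matrix (Fin n) (Fin n) ℝ} (hn : 0 < n)
    (hHH : H * Hᵀ = (n : ℝ) • (1 : Matrix (Fin n) (Fin n) ℝ)) :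
    Hᵀ * H = (n : ℝ) • (1 : Matrix (Fin n) (Fin n) ℝ) := by
  have hn0 : (n : ℝ) ≠ 0 := Nat.cast_ne_zero.mpr hn.ne'
  have h1 : H * ((n : ℝ)⁻¹ • Hᵀ) = 1 := by
    rw [Matrix.mul_smul, hHH, smul_smul, inv_mul_cancel₀ hn0, one_smul]
  have h2 : ((n : ℝ)⁻¹ • Hᵀ) * H = 1 := mul_eq_one_comm.mp h1
  calc Hᵀ * H = (n : ℝ) • (((n : ℝ)⁻¹ • Hᵀ) * H) := by
        rw [Matrix.smul_mul, smul_smul, mul_inv_cancel₀ hn0, one_smul]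
    _ = (n : ℝ) • 1 := by rw [h2]

lemma cH_gram {H : Matrix (Fin n) (Fin n) ℝ} (hn : 0 < n)
    (hHH : H * Hᵀ = (n : ℝ) • (1 : Matrix (Fin n) (Fin n) ℝ)) (c : ℝ) :
    (c • H)ᴴ * (c • H) = (c ^ 2 * n) • (1 : Matrix (Fin n) (Fin n) ℝ) := by
  rw [Matrix.conjTranspose_smul, Matrix.conjTranspose_eq_transpose_of_trivial,
    Matrix.smul_mul, Matrix.mul_smul, HtH hn hHH, smul_smul, smul_smul]
  congr 1
  simp [sq]

lemma singVals_cH {H : Matrix (Fin n) (Fin n) ℝ} (hn : 0 < n)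
    (hHH : H * Hᵀ = (n : ℝ) • (1 : Matrix (Fin n) (Fin n) ℝ)) {c : ℝ} (hc : 0 ≤ c) (j : Fin n) :
    singVals (c • H) j = c * Real.sqrt n := by
  unfold singVals
  rw [eig_of_smul_one _ _ (cH_gram hn hHH c), Real.sqrt_mul (sq_nonneg c), Real.sqrt_sq hc]

lemma singVals_nonneg (A : Matrix (Fin n) (Fin n) ℝ) (j : Fin n) : 0 ≤ singVals A j :=
  Real.sqrt_nonneg _

lemma singVals_sq (A : Matrix (Fin n) (Fin n) ℝ) (j : Fin n) :
    singVals A j ^ 2 = (Matrix.isHermitian_transpose_mul_self A).eigenvalues j :=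
  Real.sq_sqrt (Matrix.eigenvalues_conjTranspose_mul_self_nonneg A j)

lemma sum_singVals_sq (A : Matrix (Fin n) (Fin n) ℝ) :
    ∑ j, singVals A j ^ 2 = ∑ i, ∑ k, (A i k) ^ 2 := by
  simp_rw [singVals_sq]
  exact sum_eig A

/-- real version of the two-point power mean inequality -/
lemma rpow_add_le {a b : ℝ} (ha : 0 ≤ a) (hb : 0 ≤ b) {q : ℝ} (hq : 1 ≤ q) :
    (a + b) ^ q ≤ 2 ^ (q - 1) * (a ^ q + b ^ q) := by
  have h := NNReal.rpow_add_le_mul_rpow_add_rpow a.toNNReal b.toNNReal hq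
  have h2 := (NNReal.coe_le_coe).2 h
  simp only [NNReal.coe_rpow, NNReal.coe_mul, NNReal.coe_add, NNReal.coe_ofNat,
    Real.coe_toNNReal a ha, Real.coe_toNNReal b hb] at h2
  exact h2

/-- dot product of a unit vector with the image under `(c•H)` gram -/
lemma hadamard_mulVec_dot {H : Matrix (Fin n) (Fin n) ℝ} (hn : 0 < n)
    (hHH : H * Hᵀ = (n : ℝ) • (1 : Matrix (Fin n) (Fin n) ℝ)) (c : ℝ) (v : Fin n → ℝ)
    (hv : v ⬝ᵥ v = 1) :
    ((c • H) *ᵥ v) ⬝ᵥ ((c • H) *ᵥ v) = c ^ 2 * n := by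
  rw [← quad_eq, cH_gram hn hHH, Matrix.smul_mulVec, Matrix.one_mulVec,
    dotProduct_smul, smul_eq_mul, hv, mul_one]

lemma stdBasis_mulVec (z : Fin n) (v : Fin n → ℝ) :
    (Matrix.single z z (1 : ℝ)) *ᵥ v = Pi.single z (v z) := by
  funext i
  simp only [Matrix.mulVec, dotProduct, Matrix.single, Matrix.of_apply,
    Pi.single_apply]
  by_cases h : z = i
  · subst h
    rw [Finset.sum_eq_single z]
    · simp
    · intro k _ hk; simp [Ne.symm hk, hk]
    · simp
  · rw [Finset.sum_eq_zero]
    · simp [Ne.symm h]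
    · intro k _; simp [h]

/-- key upper bound on the singular values of `A = J1 + c•H` -/
lemma singVals_A_le {H : Matrix (Fin n) (Fin n) ℝ} (hn : 0 < n)
    (hHH : H * Hᵀ = (n : ℝ) • (1 : Matrix (Fin n) (Fin n) ℝ)) {c : ℝ} (hc : 0 ≤ c)
    (z : Fin n) (A : Matrix (Fin n) (Fin n) ℝ)
    (hA : A = Matrix.single z z (1 : ℝ) + c • H) (j : Fin n) :
    singVals A j ≤ |V A j z| + c * Real.sqrt n := by
  set v := V A j with hv
  have hvu : v ⬝ᵥ v = 1 := basis_unit A j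
  set u : Fin n → ℝ := Pi.single z (v z) with hu
  set w : Fin n → ℝ := (c • H) *ᵥ v with hw
  have hAv : A *ᵥ v = u + w := by rw [hA, Matrix.add_mulVec, stdBasis_mulVec]
  have hww : w ⬝ᵥ w = c ^ 2 * n := hadamard_mulVec_dot hn hHH c v hvu
  have huu : u ⬝ᵥ u = (v z) ^ 2 := by simp [hu, single_dotProduct, Pi.single_apply, sq]
  have huw : u ⬝ᵥ w = v z * w z := by simp [hu, single_dotProduct]
  have hwz : |w z| ≤ c * Real.sqrt n := by
    have h1 : (w z) ^ 2 ≤ c ^ 2 * n := by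
      rw [← hww]
      have : (w z) ^ 2 ≤ ∑ i, (w i) ^ 2 :=
        Finset.single_le_sum (fun i _ => sq_nonneg (w i)) (Finset.mem_univ z)
      simpa [dotProduct, sq] using this
    have h2 : |w z| = Real.sqrt ((w z) ^ 2) := (Real.sqrt_sq_eq_abs _).symm
    rw [h2]
    calc Real.sqrt ((w z) ^ 2) ≤ Real.sqrt (c ^ 2 * n) := Real.sqrt_le_sqrt h1
      _ = c * Real.sqrt n := by rw [Real.sqrt_mul (sq_nonneg c), Real.sqrt_sq hc]
  have hbound : (A *ᵥ v) ⬝ᵥ (A *ᵥ v) ≤ (|v z| + c * Real.sqrt n) ^ 2 := by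
    rw [hAv, add_dotProduct, dotProduct_add, dotProduct_add,
      dotProduct_comm w u]
    rw [huu, huw, hww]
    have h3 : v z * w z ≤ |v z| * (c * Real.sqrt n) := by
      calc v z * w z ≤ |v z * w z| := le_abs_self _
        _ = |v z| * |w z| := abs_mul _ _
        _ ≤ |v z| * (c * Real.sqrt n) := by
            exact mul_le_mul_of_nonneg_left hwz (abs_nonneg _)
    have h4 : c ^ 2 * (n : ℝ) = (c * Real.sqrt n) ^ 2 := by
      rw [mul_pow, Real.sq_sqrt (Nat.cast_nonneg n)]
    nlinarith [sq_abs (v z), abs_nonneg (v z), mul_nonneg hc (Real.sqrt_nonneg (n : ℝ))]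
  have : singVals A j = Real.sqrt ((A *ᵥ v) ⬝ᵥ (A *ᵥ v)) := by
    unfold singVals
    rw [eig_eq_norm]
  rw [this]
  calc Real.sqrt ((A *ᵥ v) ⬝ᵥ (A *ᵥ v)) ≤ Real.sqrt ((|v z| + c * Real.sqrt n) ^ 2) :=
        Real.sqrt_le_sqrt hbound
    _ = |(|v z| + c * Real.sqrt n)| := Real.sqrt_sq_eq_abs _
    _ = |v z| + c * Real.sqrt n := abs_of_nonneg (by positivity)

/-- Parseval applied to a coordinate vector -/
lemma sum_V_sq (A : Matrix (Fin n) (Fin n) ℝ) (z : Fin n) :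
    ∑ j, (V A j z) ^ 2 = 1 := by
  have h := parseval A (Pi.single z 1)
  simp only [dotProduct_single, mul_one] at h
  rw [h]
  simp [single_dotProduct, Pi.single_apply]

end Stmt10Aux


set_option maxHeartbeats 2000000

/-- hard instance for `2 ≤ q < p ≤ ∞`: `A = J¹ + n^{-1/q-1/2}·H` with `H`
a Hadamard-type matrix. Here `p : ℝ≥0∞` and `1 / p.toReal = 0` when `p = ∞`. -/
theorem stmt10 (q : ℝ) (hq : 2 ≤ q) (p : ℝ≥0∞) (hp : ENNReal.ofReal q < p)
    (n : ℕ) (hn : 0 < n)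
    (H : Matrix (Fin n) (Fin n) ℝ) (hH : ∀ i j, H i j = 1 ∨ H i j = -1)
    (hHH : H * Hᵀ = (n : ℝ) • (1 : Matrix (Fin n) (Fin n) ℝ))
    (J1 : Matrix (Fin n) (Fin n) ℝ)
    (hJ1 : J1 = Matrix.single ⟨0, hn⟩ ⟨0, hn⟩ (1 : ℝ))
    (A : Matrix (Fin n) (Fin n) ℝ)
    (hA : A = J1 + (n : ℝ) ^ (-(1 / q) - 1 / 2) • H)
    (ε : ℝ) (hε1 : (n : ℝ) ^ (-(1 / q - 1 / p.toReal)) ≤ ε) (hε2 : ε < 1 / 2) :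
    schattenE p (A - J1) < 2 * ε * schattenE p A ∧
    nnz J1 = 1 ∧
    ∀ At : Matrix (Fin n) (Fin n) ℝ,
      schattenF q (A - At) ≤ 0.1 * schattenF q A →
      (n : ℝ) ^ 2 / 4 - 1 < (nnz At : ℝ) := by

  classical
  have hq0 : (0:ℝ) < q := lt_of_lt_of_le two_pos hq
  have hq1 : (1:ℝ) ≤ q := by linarith
  set z : Fin n := ⟨0, hn⟩ with hzdef
  have hnR0 : (0:ℝ) < (n:ℝ) := by exact_mod_cast hn
  set c : ℝ := (n : ℝ) ^ (-(1 / q) - 1 / 2) with hcdef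
  have hc0 : 0 < c := Real.rpow_pos_of_pos hnR0 _
  have hn2 : 2 ≤ n := by
    by_contra hcon
    have hn1 : n = 1 := by omega
    subst hn1
    rw [Nat.cast_one, Real.one_rpow] at hε1
    linarith
  set t : ℝ := (n:ℝ) ^ (-(1/q)) with htdef
  have ht0 : 0 < t := Real.rpow_pos_of_pos hnR0 _
  have htc : c * Real.sqrt n = t := by
    rw [Real.sqrt_eq_rpow, hcdef, ← Real.rpow_add hnR0, htdef]
    congr 1
    ring
  have hε0 : 0 < ε := lt_of_lt_of_le (Real.rpow_pos_of_pos hnR0 _) hε1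
  have hAJ : A - J1 = c • H := by rw [hA]; exact add_sub_cancel_left _ _
  haveI : Nonempty (Fin n) := ⟨z⟩
  -- singular values of A - J1
  have hσcH : ∀ j, singVals (A - J1) j = t := by
    intro j
    rw [hAJ, Stmt10Aux.singVals_cH hn hHH hc0.le, htc]
  -- lower bound for a singular value of A
  obtain ⟨j0, hj0⟩ : ∃ j0, (1/2:ℝ) < singVals A j0 := by
    have hx : (Pi.single z (1:ℝ)) ⬝ᵥ (Pi.single z 1) = 1 := by
      simp [single_dotProduct, Pi.single_apply]
    obtain ⟨j0, hj⟩ := Stmt10Aux.rayleigh hn A (Pi.single z 1) hx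
    refine ⟨j0, ?_⟩
    have hAx : (A *ᵥ Pi.single z (1:ℝ)) ⬝ᵥ (A *ᵥ Pi.single z 1) = ∑ i, (A i z)^2 := by
      simp [Matrix.mulVec_single, dotProduct, sq]
    have hAiz : ∀ i, A i z = (if z = i then (1:ℝ) else 0) + c * H i z := by
      intro i
      rw [hA, hJ1]
      simp [Matrix.add_apply, Matrix.smul_apply, Matrix.single, smul_eq_mul]
    have hsum : ∑ i, (A i z)^2 = 1 + 2*c*(H z z) + c^2*(n:ℝ) := by
      have h1 : ∀ i, (A i z)^2
          = (if z = i then (1:ℝ) + 2*c*H i z else 0) + c^2 * (H i z)^2 := by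
        intro i
        rw [hAiz i]
        by_cases h : z = i
        · subst h; simp; ring
        · simp [h]; ring
      rw [Finset.sum_congr rfl (fun i _ => h1 i), Finset.sum_add_distrib]
      congr 1
      · rw [Finset.sum_ite_eq]
        simp
      · rw [← Finset.mul_sum]
        have h2 : ∀ i ∈ Finset.univ, (H i z)^2 = (1:ℝ) := by
          intro i _
          rcases hH i z with h | h <;> rw [h] <;> norm_num
        rw [Finset.sum_congr rfl h2, Finset.sum_const, Finset.card_univ, Fintype.card_fin,
          nsmul_eq_mul, mul_one]
    have hHzz : -1 ≤ H z z := by rcases hH z z with h | h <;> rw [h] <;> norm_num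
    have hlb : (1/2 : ℝ) ≤ ∑ i, (A i z)^2 := by
      rw [hsum]
      have hs2 : Real.sqrt 2 ≤ Real.sqrt n := Real.sqrt_le_sqrt (by exact_mod_cast hn2)
      have h2 : c * Real.sqrt 2 ≤ t := by
        rw [← htc]; exact mul_le_mul_of_nonneg_left hs2 hc0.le
      have ht2 : t^2 = c^2 * (n:ℝ) := by
        rw [← htc, mul_pow, Real.sq_sqrt hnR0.le]
      nlinarith [Real.sq_sqrt (by norm_num : (0:ℝ) ≤ 2), Real.sqrt_nonneg 2, hc0, hHzz,
        sq_nonneg (t - Real.sqrt 2 / 2), hc0.le]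
    have heig : (1/2:ℝ) ≤ (Matrix.isHermitian_transpose_mul_self A).eigenvalues j0 :=
      le_trans (le_trans hlb hAx.symm.le) hj
    have : (1/2:ℝ) < Real.sqrt ((Matrix.isHermitian_transpose_mul_self A).eigenvalues j0) := by
      rw [Real.lt_sqrt (by norm_num)]
      nlinarith
    exact this
  -- claim 2
  have hnnz : nnz J1 = 1 := by
    rw [hJ1]
    unfold nnz
    rw [Finset.card_eq_one]
    refine ⟨(z, z), ?_⟩
    ext ik
    simp only [Finset.mem_filter, Finset.mem_univ, true_and, Finset.mem_singleton,
      Matrix.single, Matrix.of_apply]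
    constructor
    · intro h
      by_contra hne
      apply (Finset.mem_filter.mp h).2
      rw [if_neg]
      intro ⟨h1, h2⟩
      exact hne (Prod.ext h1.symm h2.symm)
    · intro h
      subst h
      simp
  refine ⟨?_, hnnz, ?_⟩
  · -- claim 1
    rcases eq_or_ne p ⊤ with hptop | hptop
    · subst hptop
      have hε1' : t ≤ ε := by simpa [htdef, one_div] using hε1
      unfold schattenE
      rw [if_pos rfl, if_pos rfl]
      have h1 : specNorm (A - J1) = t := by
        unfold specNorm
        simp only [hσcH]
        exact ciSup_const
      have h2 : singVals A j0 ≤ specNorm A :=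
        le_ciSup (Set.Finite.bddAbove (Set.finite_range _)) j0
      rw [h1]
      nlinarith
    · have hqpr : q < p.toReal := by
        rw [← ENNReal.ofReal_lt_iff_lt_toReal hq0.le hptop]
        exact hp
      have hpr0 : 0 < p.toReal := lt_trans hq0 hqpr
      unfold schattenE
      rw [if_neg hptop, if_neg hptop]
      have hL : schattenF p.toReal (A - J1) = (n:ℝ) ^ (1/p.toReal) * t := by
        unfold schattenF
        simp only [hσcH]
        rw [Finset.sum_const, Finset.card_univ, Fintype.card_fin, nsmul_eq_mul,
          Real.mul_rpow (Nat.cast_nonneg n) (Real.rpow_nonneg ht0.le _)]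
        congr 1
        rw [← Real.rpow_mul ht0.le, mul_one_div_cancel hpr0.ne', Real.rpow_one]
      have hLε : (n:ℝ) ^ (1/p.toReal) * t ≤ ε := by
        rw [htdef, ← Real.rpow_add hnR0]
        calc (n:ℝ) ^ (1/p.toReal + -(1/q)) = (n:ℝ) ^ (-(1/q - 1/p.toReal)) := by
              congr 1; ring
          _ ≤ ε := hε1
      have hR : 1/2 < schattenF p.toReal A := by
        have h2 : singVals A j0 ^ p.toReal ≤ ∑ j, singVals A j ^ p.toReal :=
          Finset.single_le_sum
            (fun j _ => Real.rpow_nonneg (Stmt10Aux.singVals_nonneg A j) _)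
            (Finset.mem_univ j0)
        have h1 : singVals A j0 ≤ schattenF p.toReal A := by
          unfold schattenF
          calc singVals A j0 = (singVals A j0 ^ p.toReal) ^ (1/p.toReal) := by
                rw [← Real.rpow_mul (Stmt10Aux.singVals_nonneg A j0),
                  mul_one_div_cancel hpr0.ne', Real.rpow_one]
            _ ≤ (∑ j, singVals A j ^ p.toReal) ^ (1/p.toReal) :=
                Real.rpow_le_rpow (Real.rpow_nonneg (Stmt10Aux.singVals_nonneg A j0) _) h2
                  (by positivity)
        linarith
      rw [hL]
      nlinarith
  · -- claim 3
    intro At hAt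
    by_contra hcon
    push_neg at hcon
    -- upper bound: schattenF q A ≤ 2
    have hub : schattenF q A ≤ 2 := by
      have hσle : ∀ j, singVals A j ^ q ≤ 2^(q-1) * (|Stmt10Aux.V A j z|^q + t^q) := by
        intro j
        have h1 := Stmt10Aux.singVals_A_le hn hHH hc0.le z A (by rw [hA, hJ1]) j
        calc singVals A j ^ q ≤ (|Stmt10Aux.V A j z| + c * Real.sqrt n)^q :=
              Real.rpow_le_rpow (Stmt10Aux.singVals_nonneg A j) h1 hq0.le
          _ = (|Stmt10Aux.V A j z| + t)^q := by rw [htc]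
          _ ≤ 2^(q-1) * (|Stmt10Aux.V A j z|^q + t^q) :=
              Stmt10Aux.rpow_add_le (abs_nonneg _) ht0.le hq1
      have hper : ∑ j, (Stmt10Aux.V A j z)^2 = 1 := Stmt10Aux.sum_V_sq A z
      have hVq : ∑ j, |Stmt10Aux.V A j z| ^ q ≤ 1 := by
        have hterm : ∀ j, |Stmt10Aux.V A j z| ^ q ≤ (Stmt10Aux.V A j z)^2 := by
          intro j
          rcases eq_or_ne (Stmt10Aux.V A j z) 0 with h | h
          · rw [h, abs_zero, Real.zero_rpow hq0.ne']
            positivity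
          · have habs : 0 < |Stmt10Aux.V A j z| := abs_pos.2 h
            have hle1 : |Stmt10Aux.V A j z| ≤ 1 := by
              rw [← sq_le_one_iff_abs_le_one]
              calc (Stmt10Aux.V A j z)^2 ≤ ∑ j', (Stmt10Aux.V A j' z)^2 :=
                    Finset.single_le_sum (f := fun j' => (Stmt10Aux.V A j' z)^2)
                      (fun _ _ => sq_nonneg _) (Finset.mem_univ j)
                _ = 1 := hper
            calc |Stmt10Aux.V A j z| ^ q ≤ |Stmt10Aux.V A j z| ^ (2:ℝ) :=
                  Real.rpow_le_rpow_of_exponent_ge habs hle1 hq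
              _ = (Stmt10Aux.V A j z)^2 := by
                  rw [show (2:ℝ) = ((2:ℕ):ℝ) by norm_num, Real.rpow_natCast, sq_abs]
        calc ∑ j, |Stmt10Aux.V A j z|^q ≤ ∑ j, (Stmt10Aux.V A j z)^2 :=
              Finset.sum_le_sum (fun j _ => hterm j)
          _ = 1 := hper
      have htq : t ^ q = ((n:ℝ))⁻¹ := by
        rw [htdef, ← Real.rpow_mul hnR0.le,
          show -(1/q)*q = (-1:ℝ) by rw [one_div, neg_mul, inv_mul_cancel₀ hq0.ne'],
          Real.rpow_neg_one]
      have hsum : ∑ j, singVals A j ^ q ≤ 2^q := by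
        have h2q1 : (0:ℝ) < 2^(q-1 : ℝ) := Real.rpow_pos_of_pos two_pos _
        calc ∑ j, singVals A j ^ q ≤ ∑ j, 2^(q-1) * (|Stmt10Aux.V A j z|^q + t^q) :=
              Finset.sum_le_sum (fun j _ => hσle j)
          _ = 2^(q-1) * (∑ j, |Stmt10Aux.V A j z|^q + ∑ j, t^q) := by
              rw [← Finset.mul_sum, Finset.sum_add_distrib]
          _ ≤ 2^(q-1) * (1 + 1) := by
              have hconst : ∑ _j : Fin n, t^q = 1 := by
                rw [Finset.sum_const, Finset.card_univ, Fintype.card_fin, nsmul_eq_mul, htq]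
                field_simp
              rw [hconst]
              nlinarith [hVq, h2q1]
          _ = 2^q := by
              rw [show (1:ℝ)+1 = 2 by norm_num,
                ← Real.rpow_add_one (by norm_num : (2:ℝ) ≠ 0), sub_add_cancel]
      unfold schattenF
      calc (∑ j, singVals A j ^ q)^(1/q) ≤ ((2:ℝ)^q)^(1/q) :=
            Real.rpow_le_rpow
              (Finset.sum_nonneg fun j _ =>
                Real.rpow_nonneg (Stmt10Aux.singVals_nonneg A j) _) hsum (by positivity)
        _ = 2 := by
            rw [← Real.rpow_mul (by norm_num : (0:ℝ) ≤ 2), mul_one_div_cancel hq0.ne',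
              Real.rpow_one]
    set D := A - At with hDdef
    have hDnn : ∀ j, 0 ≤ singVals D j := Stmt10Aux.singVals_nonneg D
    have hSqnn : (0:ℝ) ≤ ∑ j, singVals D j ^ q :=
      Finset.sum_nonneg fun j _ => Real.rpow_nonneg (hDnn j) _
    have hSq : ∑ j, singVals D j ^ q ≤ (0.2:ℝ)^q := by
      have h02 : schattenF q D ≤ 0.2 := by
        calc schattenF q D ≤ 0.1 * schattenF q A := hAt
          _ ≤ 0.1 * 2 := by linarith
          _ = 0.2 := by norm_num
      calc ∑ j, singVals D j ^ q = ((∑ j, singVals D j ^ q)^(1/q))^q := by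
            rw [← Real.rpow_mul hSqnn, one_div_mul_cancel hq0.ne', Real.rpow_one]
        _ ≤ (0.2:ℝ)^q := Real.rpow_le_rpow (Real.rpow_nonneg hSqnn _) h02 hq0.le
    set F := ∑ j, singVals D j ^ 2 with hFdef
    have hFnn : 0 ≤ F := Finset.sum_nonneg fun j _ => sq_nonneg _
    -- power-mean upper bound on F
    have hpm : F ≤ 0.04 * (n:ℝ) ^ (1 - 2/q) := by
      have hw' : ∑ _i : Fin n, ((n:ℝ))⁻¹ = 1 := by
        rw [Finset.sum_const, Finset.card_univ, Fintype.card_fin, nsmul_eq_mul]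
        field_simp
      have h := Real.rpow_arith_mean_le_arith_mean_rpow Finset.univ (fun _ => ((n:ℝ))⁻¹)
        (fun j => singVals D j ^ 2) (fun i _ => by positivity) hw'
        (fun i _ => sq_nonneg _) (by linarith : (1:ℝ) ≤ q/2)
      have hs2q : ∀ j, ((singVals D j ^ 2 : ℝ)) ^ (q/2) = singVals D j ^ q := by
        intro j
        rw [← Real.rpow_natCast (singVals D j) 2, ← Real.rpow_mul (hDnn j)]
        congr 1
        push_cast
        ring
      simp only [hs2q] at h
      rw [← Finset.mul_sum, ← Finset.mul_sum] at h
      have h2 : (((n:ℝ))⁻¹ * F)^(q/2) ≤ ((n:ℝ))⁻¹ * (0.2:ℝ)^q := by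
        refine le_trans h ?_
        have := inv_pos.2 hnR0
        nlinarith [hSq]
      have h3 : ((n:ℝ))⁻¹ * F ≤ (((n:ℝ))⁻¹ * (0.2:ℝ)^q) ^ (2/q) := by
        have hnnF : 0 ≤ ((n:ℝ))⁻¹ * F := by positivity
        calc ((n:ℝ))⁻¹ * F = ((((n:ℝ))⁻¹ * F)^(q/2))^(2/q) := by
              rw [← Real.rpow_mul hnnF, show q/2*(2/q) = 1 by field_simp, Real.rpow_one]
          _ ≤ ((((n:ℝ))⁻¹ * (0.2:ℝ)^q))^(2/q) :=
              Real.rpow_le_rpow (by positivity) h2 (by positivity)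
      have h4 : ((((n:ℝ))⁻¹ * (0.2:ℝ)^q)) ^ (2/q) = (n:ℝ)^(-(2/q)) * 0.04 := by
        rw [Real.mul_rpow (by positivity) (by positivity)]
        congr 1
        · rw [← Real.rpow_neg_one (n:ℝ), ← Real.rpow_mul hnR0.le]
          congr 1
          ring
        · rw [← Real.rpow_mul (by norm_num : (0:ℝ) ≤ 0.2), show q*(2/q) = 2 by field_simp,
            show (2:ℝ) = ((2:ℕ):ℝ) by norm_num, Real.rpow_natCast]
          norm_num
      have h5 : F ≤ (n:ℝ) * ((n:ℝ)^(-(2/q)) * 0.04) := by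
        have h6 := mul_le_mul_of_nonneg_left (h3.trans h4.le) hnR0.le
        calc F = (n:ℝ) * (((n:ℝ))⁻¹ * F) := by field_simp
          _ ≤ (n:ℝ) * ((n:ℝ)^(-(2/q)) * 0.04) := h6
      calc F ≤ (n:ℝ) * ((n:ℝ)^(-(2/q)) * 0.04) := h5
        _ = 0.04 * (n:ℝ)^(1 - 2/q) := by
            have hmul : (n:ℝ) * (n:ℝ)^(-(2/q)) = (n:ℝ)^(1 - 2/q) := by
              nth_rewrite 1 [← Real.rpow_one (n:ℝ)]
              rw [← Real.rpow_add hnR0]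
              congr 1
            rw [← hmul]
            ring
    -- counting lower bound on F
    have hfro : F = ∑ i, ∑ k, (D i k)^2 := Stmt10Aux.sum_singVals_sq D
    set Sf : Finset (Fin n × Fin n) :=
      (Finset.univ.filter fun ik : Fin n × Fin n => At ik.1 ik.2 = 0).erase (z, z) with hSf
    have hcard : (3/4) * (n:ℝ)^2 ≤ (Sf.card : ℝ) := by
      set Z : Finset (Fin n × Fin n) :=
        Finset.univ.filter fun ik : Fin n × Fin n => At ik.1 ik.2 = 0 with hZ
      have h1 : n * n ≤ Z.card + nnz At := by
        have hsub : (Finset.univ : Finset (Fin n × Fin n)) ⊆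
            Z ∪ (Finset.univ.filter fun ik : Fin n × Fin n => At ik.1 ik.2 ≠ 0) := by
          intro ik _
          rw [Finset.mem_union, hZ]
          by_cases h : At ik.1 ik.2 = 0
          · left; simp [h]
          · right; simp [h]
        have hle := Finset.card_le_card hsub
        have hun := Finset.card_union_le Z
          (Finset.univ.filter fun ik : Fin n × Fin n => At ik.1 ik.2 ≠ 0)
        rw [Finset.card_univ, Fintype.card_prod, Fintype.card_fin] at hle
        unfold nnz
        omega
      have h2 : (n:ℝ)^2 - (nnz At : ℝ) ≤ (Z.card : ℝ) := by
        have : (n:ℝ) * (n:ℝ) ≤ (Z.card : ℝ) + (nnz At : ℝ) := by exact_mod_cast h1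
        nlinarith [this]
      have h3 : (Z.card : ℝ) - 1 ≤ (Sf.card : ℝ) := by
        by_cases hmem : (z, z) ∈ Z
        · have := Finset.card_erase_of_mem hmem
          rw [hSf, this]
          have hpos : 1 ≤ Z.card := Finset.card_pos.2 ⟨_, hmem⟩
          rw [Nat.cast_sub hpos]
          norm_num
        · rw [hSf, Finset.erase_eq_of_notMem hmem]
          linarith
      have h4 : (nnz At : ℝ) ≤ (n:ℝ)^2/4 - 1 := hcon
      nlinarith [h2, h3, h4]
    have hentry : ∀ ik ∈ Sf, c^2 ≤ (D ik.1 ik.2)^2 := by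
      intro ik hik
      have hik2 := hik
      rw [hSf, Finset.mem_erase, Finset.mem_filter] at hik2
      obtain ⟨hne, -, hzero⟩ := hik2
      have hD0 : D ik.1 ik.2 = c * H ik.1 ik.2 := by
        rw [hDdef, Matrix.sub_apply, hzero, sub_zero, hA, hJ1, Matrix.add_apply,
          Matrix.smul_apply, smul_eq_mul]
        have hJ0 : Matrix.single z z (1:ℝ) ik.1 ik.2 = 0 := by
          rw [Matrix.single]
          simp only [Matrix.of_apply]
          rw [if_neg]
          intro ⟨ha, hb⟩
          exact hne (Prod.ext ha.symm hb.symm)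
        rw [hJ0, zero_add]
      have hH2 : (H ik.1 ik.2)^2 = 1 := by
        rcases hH ik.1 ik.2 with h | h <;> rw [h] <;> norm_num
      rw [hD0, mul_pow, hH2, mul_one]
    have hcount : (3/4) * ((n:ℝ)^2 * c^2) ≤ F := by
      calc (3/4) * ((n:ℝ)^2 * c^2) = ((3/4) * (n:ℝ)^2) * c^2 := by ring
        _ ≤ (Sf.card : ℝ) * c^2 := by nlinarith [sq_nonneg c, hcard]
        _ = ∑ _ik ∈ Sf, c^2 := by rw [Finset.sum_const, nsmul_eq_mul]
        _ ≤ ∑ ik ∈ Sf, (D ik.1 ik.2)^2 := Finset.sum_le_sum hentry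
        _ ≤ ∑ ik : Fin n × Fin n, (D ik.1 ik.2)^2 :=
            Finset.sum_le_sum_of_subset_of_nonneg (Finset.subset_univ Sf)
              (fun _ _ _ => sq_nonneg _)
        _ = ∑ i, ∑ k, (D i k)^2 :=
            Fintype.sum_prod_type (f := fun ik : Fin n × Fin n => D ik.1 ik.2 ^ 2)
        _ = F := hfro.symm
    have hnc : (n:ℝ)^2 * c^2 = (n:ℝ) ^ (1 - 2/q) := by
      rw [hcdef, ← Real.rpow_natCast ((n:ℝ) ^ (-(1/q) - 1/2)) 2, ← Real.rpow_mul hnR0.le,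
        show ((n:ℝ)^2 : ℝ) = (n:ℝ)^((2:ℕ):ℝ) by rw [Real.rpow_natCast],
        ← Real.rpow_add hnR0]
      congr 1
      push_cast
      ring
    have hpos : (0:ℝ) < (n:ℝ) ^ (1 - 2/q) := Real.rpow_pos_of_pos hnR0 _
    rw [hnc] at hcount
    nlinarith [hcount, hpm, hpos]
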